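/- Let W' be a generalized rank two parabolic subgroup of W with canonical generators r₁, r₂, and order its reflections as u₁ = r₁, u₂ = r₁r₂r₁, …, u_m = r₂ (alternating words). Then: if ω_c(β_{u₁}, β_{u_m}) = 0 then ω_c(β_{u_i}, β_{u_j}) = 0 for all i, j; if ω_c(β_{u₁}, β_{u_m}) < 0 then ω_c(β_{u_i}, β_{u_j}) < 0 for all i < j; and if ω_c(β_{u₁}, β_{u_m}) > 0 then ω_c(β_{u_i}, β_{u_j}) > 0 for all i < j. -/

import Mathlib

/-- A geometric (reflection) representation of the Coxeter system `cs`, arising from a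
symmetrizable generalized Cartan matrix `a` with symmetrizing function `δ`.  The field `α`
records the simple roots (a basis of `V`), `ρ` is the reflection representation, and `β`
assigns to each reflection `t = w sᵢ w⁻¹` its positive root (the member of `±(w · αᵢ)` lying
in the nonnegative span of the simple roots). -/
structure CoxeterGeomRep {B W : Type*} [Group W] (M : CoxeterMatrix B)
    (cs : CoxeterSystem M W) (V : Type*) [AddCommGroup V] [Module ℝ V] where
  /-- the generalized Cartan matrix -/
  a : B → B → ℝ
  /-- the symmetrizing function -/
  δ : B → ℝ
  δ_pos : ∀ i, 0 < δ i
  symmetrize : ∀ i j, δ i * a i j = δ j * a j i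
  δ_conj : ∀ i j, IsConj (cs.simple i) (cs.simple j) → δ i = δ j
  a_diag : ∀ i, a i i = 2
  a_offdiag : ∀ i j, i ≠ j → a i j ≤ 0
  a_fin : ∀ i j, i ≠ j → M i j ≠ 0 →
    a i j * a j i = 4 * Real.cos (Real.pi / (M i j : ℝ)) ^ 2
  a_inf : ∀ i j, M i j = 0 → 4 ≤ a i j * a j i
  a_zero : ∀ i j, a i j = 0 ↔ a j i = 0
  /-- the simple roots, a basis of `V` -/
  α : Module.Basis B ℝ V
  /-- the reflection representation of `W` on `V` -/
  ρ : W →* (V ≃ₗ[ℝ] V)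
  act : ∀ i j, ρ (cs.simple i) (α j) = α j - a i j • α i
  /-- the positive root associated to each reflection -/
  β : W → V
  β_root : ∀ (w : W) (i : B),
    β (w * cs.simple i * w⁻¹) = ρ w (α i) ∨ β (w * cs.simple i * w⁻¹) = -(ρ w (α i))
  β_pos : ∀ t, cs.IsReflection t →
    ∃ c : B →₀ ℝ, (∀ i, 0 ≤ c i) ∧ β t = c.sum fun i r => r • α i

/-- `v` lies in the nonnegative linear span (the cone generated by) the set `X`. -/
def InCone {V : Type*} [AddCommGroup V] [Module ℝ V] (X : Set V) (v : V) : Prop :=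
  ∃ (n : ℕ) (x : Fin n → V) (c : Fin n → ℝ),
    (∀ k, x k ∈ X) ∧ (∀ k, 0 ≤ c k) ∧ v = ∑ k, c k • x k

/-- `R` is the set of canonical generators of the reflection subgroup `W'`:  every positive
root of a reflection of `W'` lies in the nonnegative span of `{β_r : r ∈ R}`, and no `β_r`
lies in the nonnegative span of the positive roots of the other reflections of `W'`. -/
def IsCanonicalGenerators {B W V : Type*} [Group W] [AddCommGroup V] [Module ℝ V]
    {M : CoxeterMatrix B} (cs : CoxeterSystem M W) (g : CoxeterGeomRep M cs V)
    (W' : Subgroup W) (R : Set W) : Prop :=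
  R ⊆ {t | t ∈ W' ∧ cs.IsReflection t} ∧
  (∀ t ∈ W', cs.IsReflection t → InCone (g.β '' R) (g.β t)) ∧
  ∀ r ∈ R, ¬ InCone (g.β '' ({t | t ∈ W' ∧ cs.IsReflection t} \ {r})) (g.β r)
/-- `F` is the Euler form `E_c` for the Coxeter element `c` given by the reduced word `l`
(an enumeration of the simple generators):  on simple coroots and simple roots it is given
by `E_c(α^∨_{s_i}, α_{s_j}) = a_{s_i s_j}` if `i > j`, `1` if `i = j`, `0` if `i < j`. -/
def IsEulerForm {B W V : Type*} [Group W] [AddCommGroup V] [Module ℝ V]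
    {M : CoxeterMatrix B} (cs : CoxeterSystem M W) (g : CoxeterGeomRep M cs V)
    (l : List B) (F : V →ₗ[ℝ] V →ₗ[ℝ] ℝ) : Prop :=
  ∀ i j : Fin l.length,
    F ((g.δ (l.get i))⁻¹ • g.α (l.get i)) (g.α (l.get j)) =
      if (j : ℕ) < (i : ℕ) then g.a (l.get i) (l.get j)
      else if (i : ℕ) = (j : ℕ) then 1 else 0

/-- The reflections `u₁, u₂, …, u_m` of the dihedral reflection subgroup generated by
`r₁, r₂`: `inl i` denotes `u_{i+1} = (r₁r₂)^i r₁` (counted from `r₁`) and `inr k` denotes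
`u_{m-k} = (r₂r₁)^k r₂` (counted from `r₂`). -/
def dihedralRefl {W : Type*} [Group W] (r₁ r₂ : W) : ℕ ⊕ ℕ → W
  | .inl i => (r₁ * r₂) ^ i * r₁
  | .inr k => (r₂ * r₁) ^ k * r₂

/-- The index `x` is a valid index for a reflection of the dihedral group in which `r₁ r₂`
has order `m` (with `m = 0` encoding infinite order). -/
def DihedralIdx (m : ℕ) : ℕ ⊕ ℕ → Prop
  | .inl i => m = 0 ∨ i < m
  | .inr k => m = 0 ∨ k < m

/-- `x` strictly precedes `y` in the canonical ordering `u₁, u₂, …, u_m` of the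
reflections of the dihedral group in which `r₁ r₂` has order `m` (`m = 0` encoding
`m = ∞`); `inl i` sits in position `i + 1` and `inr k` in position `m - k`. -/
def DihedralBefore (m : ℕ) : ℕ ⊕ ℕ → ℕ ⊕ ℕ → Prop
  | .inl i, .inl j => i < j ∧ (m = 0 ∨ j < m)
  | .inl i, .inr k => m = 0 ∨ (k < m ∧ i + 1 < m - k)
  | .inr k, .inl i => m ≠ 0 ∧ k < m ∧ i < m ∧ m - k < i + 1
  | .inr k, .inr k' => k' < k ∧ (m = 0 ∨ k < m)

namespace OmegaAux


noncomputable def cheb (s : ℝ) : ℕ → ℝ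
  | 0 => 0
  | 1 => 1
  | n+2 => s * cheb s (n+1) - cheb s n

@[simp] lemma cheb_zero (s : ℝ) : cheb s 0 = 0 := rfl
@[simp] lemma cheb_one (s : ℝ) : cheb s 1 = 1 := rfl
lemma cheb_step (s : ℝ) (n : ℕ) : cheb s (n+2) = s * cheb s (n+1) - cheb s n := rfl
@[simp] lemma cheb_two (s : ℝ) : cheb s 2 = s := by rw [cheb_step]; simp

/-- Catalan-type determinant identity for the Chebyshev sequence. -/
lemma cheb_det (s : ℝ) (k : ℕ) : ∀ n : ℕ,
    cheb s (n+1) * cheb s (n+k) - cheb s n * cheb s (n+k+1) = cheb s k := by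
  intro n
  induction n with
  | zero => simp
  | succ n ih =>
      rw [show n+1+k = n+k+1 from by omega, show n+k+1+1 = n+k+2 from by omega,
        show n+1+1 = n+2 from by omega, cheb_step s (n+k), cheb_step s n]
      linear_combination ih

lemma chebA (s : ℝ) (hs : 2 ≤ s) : ∀ n : ℕ, 0 ≤ cheb s n ∧ cheb s n + 1 ≤ cheb s (n+1) := by
  intro n
  induction n with
  | zero => simp
  | succ n ih =>
      obtain ⟨h0, h1⟩ := ih
      constructor
      · linarith
      · rw [cheb_step]
        nlinarith

lemma chebA_pos (s : ℝ) (hs : 2 ≤ s) (n : ℕ) : 1 ≤ cheb s (n+1) := by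
  have := chebA s hs n
  linarith [this.1, this.2]

lemma cheb_sin (φ : ℝ) : ∀ n : ℕ, cheb (2 * Real.cos φ) n * Real.sin φ = Real.sin (n * φ) := by
  intro n
  induction n using Nat.twoStepInduction with
  | zero => simp
  | one => simp
  | more n ih1 ih2 =>
      rw [cheb_step]
      have e1 : ((n + 2 : ℕ) : ℝ) * φ = ((n+1 : ℕ) : ℝ) * φ + φ := by push_cast; ring
      have e2 : ((n : ℕ) : ℝ) * φ = ((n+1 : ℕ) : ℝ) * φ - φ := by push_cast; ring
      rw [e1, Real.sin_add]
      rw [e2, Real.sin_sub] at ih1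
      linear_combination ih2 * (2 * Real.cos φ) - ih1



open Real

lemma sin_prod (a b : ℝ) : sin a * sin b = (cos (a-b) - cos (a+b))/2 := by
  rw [Real.cos_sub, Real.cos_add]; ring

lemma cos_lt_cos_lo {a b : ℝ} (h0 : 0 ≤ a) (hab : a < b) (hb : b ≤ π) : cos b < cos a :=
  Real.strictAntiOn_cos ⟨h0, le_of_lt (lt_of_lt_of_le hab hb)⟩ ⟨le_trans h0 (le_of_lt hab), hb⟩ hab

lemma cos_lt_cos_hi {a b : ℝ} (h0 : π ≤ a) (hab : a < b) (hb : b ≤ 2*π) : cos a < cos b := by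
  have e1 : cos a = cos (2*π - a) := (Real.cos_two_pi_sub a).symm
  have e2 : cos b = cos (2*π - b) := (Real.cos_two_pi_sub b).symm
  rw [e1, e2]
  exact cos_lt_cos_lo (by linarith) (by linarith) (by linarith)

section TrigB
variable {m : ℕ} (hm : 3 ≤ m)

private lemma phi_pos (hm : 3 ≤ m) : 0 < π / m := by
  apply div_pos Real.pi_pos
  exact_mod_cast Nat.lt_of_lt_of_le (by norm_num) hm

private lemma phi_lt_pi (hm : 3 ≤ m) : π / m < π := by
  apply div_lt_self Real.pi_pos
  exact_mod_cast Nat.lt_of_lt_of_le (by norm_num) hm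

private lemma m_phi (hm : 3 ≤ m) : (m : ℝ) * (π / m) = π := by
  have hm0 : (m : ℝ) ≠ 0 := by
    have : (0:ℝ) < m := by exact_mod_cast Nat.lt_of_lt_of_le (by norm_num) hm
    linarith
  field_simp

private lemma sin_phi_pos (hm : 3 ≤ m) : 0 < sin (π / m) :=
  Real.sin_pos_of_pos_of_lt_pi (phi_pos hm) (phi_lt_pi hm)

lemma chebB_nonneg (hm : 3 ≤ m) {n : ℕ} (hn : n ≤ m) : 0 ≤ cheb (2 * cos (π/m)) n := by
  have h := cheb_sin (π/m) n
  have hs := sin_phi_pos hm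
  have hnφ : 0 ≤ (n:ℝ) * (π/m) := by positivity
  have hnφ' : (n:ℝ) * (π/m) ≤ π := by
    have hb : (n:ℝ)*(π/m) ≤ (m:ℝ)*(π/m) :=
      mul_le_mul_of_nonneg_right (by exact_mod_cast hn) (le_of_lt (phi_pos hm))
    rwa [m_phi hm] at hb
  have := Real.sin_nonneg_of_nonneg_of_le_pi hnφ hnφ'
  nlinarith

lemma chebB_pos (hm : 3 ≤ m) {n : ℕ} (hn0 : 0 < n) (hn : n < m) : 0 < cheb (2 * cos (π/m)) n := by
  have h := cheb_sin (π/m) n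
  have hs := sin_phi_pos hm
  have hnφ : 0 < (n:ℝ) * (π/m) := by
    apply mul_pos _ (phi_pos hm)
    exact_mod_cast hn0
  have hnφ' : (n:ℝ) * (π/m) < π := by
    have hb : (n:ℝ)*(π/m) < (m:ℝ)*(π/m) :=
      mul_lt_mul_of_pos_right (by exact_mod_cast hn) (phi_pos hm)
    rwa [m_phi hm] at hb
  have := Real.sin_pos_of_pos_of_lt_pi hnφ hnφ'
  nlinarith

private lemma cheb_prod_key (i k : ℕ) :
    (cheb (2 * cos (π/m)) (i+1) * cheb (2 * cos (π/m)) (k+1)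
      - cheb (2 * cos (π/m)) i * cheb (2 * cos (π/m)) k) * (sin (π/m) * sin (π/m))
    = (cos (((i:ℝ)+(k:ℝ))*(π/m)) - cos (((i:ℝ)+(k:ℝ)+2)*(π/m)))/2 := by
  set φ := π / m with hφ
  have e1 : cheb (2*cos φ) (i+1) * sin φ = sin (((i:ℝ)+1)*φ) := by
    have := cheb_sin φ (i+1); push_cast at this; exact this
  have e2 : cheb (2*cos φ) (k+1) * sin φ = sin (((k:ℝ)+1)*φ) := by
    have := cheb_sin φ (k+1); push_cast at this; exact this
  have e3 : cheb (2*cos φ) i * sin φ = sin ((i:ℝ)*φ) := cheb_sin φ i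
  have e4 : cheb (2*cos φ) k * sin φ = sin ((k:ℝ)*φ) := cheb_sin φ k
  have p1 := sin_prod (((i:ℝ)+1)*φ) (((k:ℝ)+1)*φ)
  have p2 := sin_prod ((i:ℝ)*φ) ((k:ℝ)*φ)
  rw [show ((i:ℝ)+1)*φ - ((k:ℝ)+1)*φ = (i:ℝ)*φ - (k:ℝ)*φ from by ring,
    show ((i:ℝ)+1)*φ + ((k:ℝ)+1)*φ = ((i:ℝ)+(k:ℝ)+2)*φ from by ring] at p1
  rw [show (i:ℝ)*φ + (k:ℝ)*φ = ((i:ℝ)+(k:ℝ))*φ from by ring] at p2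
  calc (cheb (2*cos φ) (i+1) * cheb (2*cos φ) (k+1)
      - cheb (2*cos φ) i * cheb (2*cos φ) k) * (sin φ * sin φ)
      = (cheb (2*cos φ) (i+1) * sin φ) * (cheb (2*cos φ) (k+1) * sin φ)
        - (cheb (2*cos φ) i * sin φ) * (cheb (2*cos φ) k * sin φ) := by ring
    _ = sin (((i:ℝ)+1)*φ) * sin (((k:ℝ)+1)*φ) - sin ((i:ℝ)*φ) * sin ((k:ℝ)*φ) := by
        rw [e1, e2, e3, e4]
    _ = _ := by rw [p1, p2]; ring

lemma chebB3 (hm : 3 ≤ m) (i k : ℕ) (h : i + k + 2 ≤ m) :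
    0 < cheb (2 * cos (π/m)) (i+1) * cheb (2 * cos (π/m)) (k+1)
      - cheb (2 * cos (π/m)) i * cheb (2 * cos (π/m)) k := by
  have key := cheb_prod_key (m := m) i k
  have hs := sin_phi_pos hm
  have hφ := phi_pos hm
  have hD : cos (((i:ℝ)+(k:ℝ)+2)*(π/m)) < cos (((i:ℝ)+(k:ℝ))*(π/m)) := by
    apply cos_lt_cos_lo
    · positivity
    · nlinarith
    · have hcast : ((i:ℝ)+(k:ℝ)+2) ≤ (m:ℝ) := by
        have : ((i+k+2 : ℕ):ℝ) ≤ (m:ℝ) := by exact_mod_cast h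
        push_cast at this; linarith
      have hb : ((i:ℝ)+(k:ℝ)+2)*(π/m) ≤ (m:ℝ)*(π/m) :=
        mul_le_mul_of_nonneg_right hcast (le_of_lt hφ)
      rwa [m_phi hm] at hb
  nlinarith [mul_pos hs hs]

lemma chebB4 (hm : 3 ≤ m) (i k : ℕ) (hi : i < m) (hk : k < m) (h : m ≤ i + k) :
    0 < cheb (2 * cos (π/m)) i * cheb (2 * cos (π/m)) k
      - cheb (2 * cos (π/m)) (i+1) * cheb (2 * cos (π/m)) (k+1) := by
  have key := cheb_prod_key (m := m) i k
  have hs := sin_phi_pos hm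
  have hφ := phi_pos hm
  have hD : cos (((i:ℝ)+(k:ℝ))*(π/m)) < cos (((i:ℝ)+(k:ℝ)+2)*(π/m)) := by
    apply cos_lt_cos_hi
    · have hcast : (m:ℝ) ≤ ((i:ℝ)+(k:ℝ)) := by
        have : ((m:ℕ):ℝ) ≤ ((i+k : ℕ):ℝ) := by exact_mod_cast h
        push_cast at this; linarith
      have hb : (m:ℝ)*(π/m) ≤ ((i:ℝ)+(k:ℝ))*(π/m) :=
        mul_le_mul_of_nonneg_right hcast (le_of_lt hφ)
      rwa [m_phi hm] at hb
    · nlinarith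
    · have h1 : ((i:ℕ):ℝ) + 1 ≤ (m:ℝ) := by
        have : ((i+1 : ℕ):ℝ) ≤ (m:ℝ) := by exact_mod_cast hi
        push_cast at this; linarith
      have h2 : ((k:ℕ):ℝ) + 1 ≤ (m:ℝ) := by
        have : ((k+1 : ℕ):ℝ) ≤ (m:ℝ) := by exact_mod_cast hk
        push_cast at this; linarith
      have hcast : ((i:ℝ)+(k:ℝ)+2) ≤ 2*(m:ℝ) := by linarith
      have hb : ((i:ℝ)+(k:ℝ)+2)*(π/m) ≤ (2*(m:ℝ))*(π/m) :=
        mul_le_mul_of_nonneg_right hcast (le_of_lt hφ)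
      have e : (2*(m:ℝ))*(π/m) = 2*π := by rw [mul_assoc, m_phi hm]
      rwa [e] at hb
  nlinarith [mul_pos hs hs]

end TrigB


open Real

variable {B W V : Type*} [Group W] [AddCommGroup V] [Module ℝ V]
  {M : CoxeterMatrix B} {cs : CoxeterSystem M W} (g : CoxeterGeomRep M cs V)

lemma beta_ne_zero {t : W} (ht : cs.IsReflection t) : g.β t ≠ 0 := by
  obtain ⟨w, i, rfl⟩ := ht
  have hα : g.ρ w (g.α i) ≠ 0 := by
    rw [ne_eq, (g.ρ w).map_eq_zero_iff]
    exact g.α.ne_zero i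
  rcases g.β_root w i with h | h <;> rw [h] <;> simpa using hα

lemma beta_conj {t : W} (ht : cs.IsReflection t) (w : W) :
    g.β (w * t * w⁻¹) = g.ρ w (g.β t) ∨ g.β (w * t * w⁻¹) = -(g.ρ w (g.β t)) := by
  obtain ⟨u, i, rfl⟩ := ht
  have h1 := g.β_root u i
  have h2 := g.β_root (w*u) i
  have he : (w*u) * cs.simple i * (w*u)⁻¹ = w * (u * cs.simple i * u⁻¹) * w⁻¹ := by group
  rw [he] at h2
  have hcomp : g.ρ (w*u) (g.α i) = g.ρ w (g.ρ u (g.α i)) := by rw [map_mul]; rfl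
  rcases h1 with h1 | h1 <;> rcases h2 with h2 | h2
  · left; rw [h2, hcomp, h1]
  · right; rw [h2, hcomp, h1]
  · right
    have h1' : g.ρ u (g.α i) = -(g.β (u * cs.simple i * u⁻¹)) := by rw [h1, neg_neg]
    rw [h2, hcomp, h1', map_neg]
  · left
    have h1' : g.ρ u (g.α i) = -(g.β (u * cs.simple i * u⁻¹)) := by rw [h1, neg_neg]
    rw [h2, hcomp, h1', map_neg, neg_neg]

lemma rho_simple (i : B) : ∃ φ : V →ₗ[ℝ] ℝ, φ (g.α i) = 2 ∧
    ∀ z, g.ρ (cs.simple i) z = z - φ z • g.α i := by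
  classical
  let φ : V →ₗ[ℝ] ℝ :=
    (Finsupp.linearCombination ℝ (g.a i)).comp (g.α.repr : V →ₗ[ℝ] (B →₀ ℝ))
  have hφ : ∀ j, φ (g.α j) = g.a i j := by
    intro j
    simp only [φ, LinearMap.comp_apply, LinearEquiv.coe_coe, Module.Basis.repr_self]
    simp [Finsupp.linearCombination_single]
  have hlin : (g.ρ (cs.simple i)).toLinearMap
      = LinearMap.id - φ.smulRight (g.α i) := by
    apply Module.Basis.ext g.α
    intro j
    simp only [LinearEquiv.coe_toLinearMap, LinearMap.sub_apply, LinearMap.id_apply,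
      LinearMap.smulRight_apply]
    rw [g.act i j, hφ j]
  refine ⟨φ, by rw [hφ]; exact g.a_diag i, ?_⟩
  intro z
  have := LinearMap.congr_fun hlin z
  simpa using this

lemma rho_reflection {t : W} (ht : cs.IsReflection t) :
    ∃ φ : V →ₗ[ℝ] ℝ, φ (g.β t) = 2 ∧ ∀ z, g.ρ t z = z - φ z • g.β t := by
  obtain ⟨w, i, rfl⟩ := ht
  obtain ⟨ψ, hψ2, hψ⟩ := rho_simple g i
  obtain ⟨ε, hε, hβ⟩ : ∃ ε : ℝ, (ε = 1 ∨ ε = -1) ∧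
      g.β (w * cs.simple i * w⁻¹) = ε • g.ρ w (g.α i) := by
    rcases g.β_root w i with h | h
    · exact ⟨1, Or.inl rfl, by rw [h, one_smul]⟩
    · exact ⟨-1, Or.inr rfl, by rw [h, neg_smul, one_smul]⟩
  have hε2 : ε * ε = 1 := by rcases hε with h | h <;> rw [h] <;> norm_num
  refine ⟨ε • (ψ.comp (g.ρ w).symm.toLinearMap), ?_, ?_⟩
  · rw [hβ]
    simp only [LinearMap.smul_apply, LinearMap.comp_apply, LinearEquiv.coe_toLinearMap,
      map_smul, LinearEquiv.symm_apply_apply, smul_eq_mul]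
    rw [hψ2]
    nlinarith [hε2]
  · intro z
    have hz : g.ρ (w * cs.simple i * w⁻¹) z = g.ρ w (g.ρ (cs.simple i) ((g.ρ w).symm z)) := by
      rw [map_mul, map_mul, map_inv]
      rfl
    rw [hz, hψ ((g.ρ w).symm z)]
    simp only [map_sub, map_smul, LinearEquiv.apply_symm_apply, LinearMap.smul_apply,
      LinearMap.comp_apply, LinearEquiv.coe_toLinearMap, smul_eq_mul, hβ]
    rw [smul_smul, mul_comm ε (ψ ((g.ρ w).symm z)), mul_assoc, hε2, mul_one]

lemma beta_repr_nonneg {t : W} (ht : cs.IsReflection t) (i : B) :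
    0 ≤ g.α.repr (g.β t) i := by
  obtain ⟨c, hc, hβ⟩ := g.β_pos t ht
  have he : g.β t = Finsupp.linearCombination ℝ (g.α : B → V) c := by
    rw [hβ, Finsupp.linearCombination_apply]
  rw [he, g.α.repr_linearCombination]
  exact hc i

section Pair

variable {W' : Subgroup W} {r₁ r₂ : W}

lemma cone_pair (hcan : IsCanonicalGenerators cs g W' {r₁, r₂}) {t : W}
    (htW : t ∈ W') (ht : cs.IsReflection t) :
    ∃ p q : ℝ, 0 ≤ p ∧ 0 ≤ q ∧ g.β t = p • g.β r₁ + q • g.β r₂ := by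
  classical
  obtain ⟨n, xf, cf, hx, hc, hv⟩ := hcan.2.1 t htW ht
  refine ⟨∑ k ∈ Finset.univ.filter (fun k => xf k = g.β r₁), cf k,
    ∑ k ∈ Finset.univ.filter (fun k => ¬ xf k = g.β r₁), cf k,
    Finset.sum_nonneg (fun k _ => hc k), Finset.sum_nonneg (fun k _ => hc k), ?_⟩
  rw [hv, ← Finset.sum_filter_add_sum_filter_not Finset.univ (fun k => xf k = g.β r₁),
    Finset.sum_smul, Finset.sum_smul]
  congr 1
  · apply Finset.sum_congr rfl
    intro k hk
    rw [Finset.mem_filter] at hk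
    rw [hk.2]
  · apply Finset.sum_congr rfl
    intro k hk
    rw [Finset.mem_filter] at hk
    have hxk := hx k
    obtain ⟨r, hrmem, hrk⟩ := hxk
    rcases hrmem with h | h
    · exfalso; apply hk.2; rw [← hrk, h]
    · rw [← hrk, Set.mem_singleton_iff.mp h]

lemma ray_lemma (hcan : IsCanonicalGenerators cs g W' {r₁, r₂}) {t : W}
    (htW : t ∈ W') (ht : cs.IsReflection t) (htne : t ≠ r₁) {p : ℝ}
    (hp : g.β t = p • g.β r₁) : False := by
  have hr₁ : r₁ ∈ W' ∧ cs.IsReflection r₁ := hcan.1 (by simp)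
  have hβt := beta_ne_zero g ht
  have hβ1 := beta_ne_zero g hr₁.2
  have hp0 : p ≠ 0 := by
    rintro rfl
    rw [zero_smul] at hp
    exact hβt hp
  obtain ⟨i, hi⟩ : ∃ i, 0 < g.α.repr (g.β r₁) i := by
    by_contra h
    push_neg at h
    apply hβ1
    have : g.α.repr (g.β r₁) = 0 := by
      ext i
      exact le_antisymm (h i) (beta_repr_nonneg g hr₁.2 i)
    simpa using g.α.repr.map_eq_zero_iff.mp this
  have h2 : g.α.repr (g.β t) i = p * g.α.repr (g.β r₁) i := by rw [hp]; simp
  have hppos : 0 < p := by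
    have h3 := beta_repr_nonneg g ht i
    rcases lt_trichotomy p 0 with h | h | h
    · nlinarith
    · exact absurd h hp0
    · exact h
  apply hcan.2.2 r₁ (by simp)
  refine ⟨1, fun _ => g.β t, fun _ => p⁻¹, ?_, ?_, ?_⟩
  · intro k
    exact ⟨t, ⟨⟨htW, ht⟩, by simpa using htne⟩, rfl⟩
  · intro k
    positivity
  · rw [hp, Fin.sum_univ_one, smul_smul, inv_mul_cancel₀ hp0, one_smul]

lemma pair_indep (hr : r₁ ≠ r₂) (hcan : IsCanonicalGenerators cs g W' {r₁, r₂}) :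
    ∀ p q : ℝ, p • g.β r₁ + q • g.β r₂ = 0 → p = 0 ∧ q = 0 := by
  have h2 : r₂ ∈ W' ∧ cs.IsReflection r₂ := hcan.1 (by simp)
  intro p q hpq
  by_cases hq : q = 0
  · subst hq
    rw [zero_smul, add_zero] at hpq
    rcases smul_eq_zero.mp hpq with h | h
    · exact ⟨h, rfl⟩
    · exact absurd h (beta_ne_zero g (hcan.1 (by simp : r₁ ∈ ({r₁, r₂} : Set W))).2)
  · exfalso
    have h' : q • g.β r₂ = (-p) • g.β r₁ := by
      rw [neg_smul]
      exact eq_neg_of_add_eq_zero_right hpq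
    have hβ2 : g.β r₂ = (q⁻¹ * (-p)) • g.β r₁ := by
      rw [← smul_smul, ← h', smul_smul, inv_mul_cancel₀ hq, one_smul]
    exact ray_lemma g hcan h2.1 h2.2 hr.symm hβ2

lemma coordU (hr : r₁ ≠ r₂) (hcan : IsCanonicalGenerators cs g W' {r₁, r₂}) :
    ∀ p q p' q' : ℝ, p • g.β r₁ + q • g.β r₂ = p' • g.β r₁ + q' • g.β r₂ →
      p = p' ∧ q = q' := by
  intro p q p' q' h
  have e : (p-p') • g.β r₁ + (q-q') • g.β r₂
      = (p • g.β r₁ + q • g.β r₂) - (p' • g.β r₁ + q' • g.β r₂) := by module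
  rw [h, sub_self] at e
  obtain ⟨e1, e2⟩ := pair_indep g hr hcan _ _ e
  constructor <;> linarith [sub_eq_zero.mp e1, sub_eq_zero.mp e2]

end Pair

lemma vrefl {r₁ r₂ : W} (h1r : cs.IsReflection r₁) (h2r : cs.IsReflection r₂) (n : ℕ) :
    cs.IsReflection ((r₁*r₂)^n * r₁) := by
  have hswap : ∀ j : ℕ, (r₁*r₂)^j * r₁ = r₁ * (r₂*r₁)^j := by
    intro j
    induction j with
    | zero => simp
    | succ j ih =>
        calc (r₁*r₂)^(j+1) * r₁ = ((r₁*r₂)^j * r₁) * (r₂ * r₁) := by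
              rw [pow_succ]; group
          _ = (r₁ * (r₂*r₁)^j) * (r₂ * r₁) := by rw [ih]
          _ = r₁ * (r₂*r₁)^(j+1) := by rw [pow_succ]; group
  have hinvp : ∀ j : ℕ, ((r₁*r₂)^j)⁻¹ = (r₂*r₁)^j := by
    intro j
    have h12 : (r₁*r₂)⁻¹ = r₂*r₁ := by rw [mul_inv_rev, h1r.inv, h2r.inv]
    rw [← inv_pow, h12]
  rcases Nat.even_or_odd n with ⟨j, hj⟩ | ⟨j, hj⟩
  · have he : (r₁*r₂)^n * r₁ = (r₁*r₂)^j * r₁ * ((r₁*r₂)^j)⁻¹ := by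
      rw [hinvp, hj]
      calc (r₁*r₂)^(j+j) * r₁ = (r₁*r₂)^j * ((r₁*r₂)^j * r₁) := by
            rw [pow_add, mul_assoc]
        _ = (r₁*r₂)^j * (r₁ * (r₂*r₁)^j) := by rw [hswap j]
        _ = (r₁*r₂)^j * r₁ * (r₂*r₁)^j := by simp only [mul_assoc]
    rw [he]
    exact h1r.conj _
  · have he : (r₁*r₂)^n * r₁ = ((r₁*r₂)^j * r₁) * r₂ * ((r₁*r₂)^j * r₁)⁻¹ := by
      rw [mul_inv_rev, hinvp, h1r.inv, hj]
      calc (r₁*r₂)^(2*j+1) * r₁ = (r₁*r₂)^j * ((r₁*r₂)^(j+1) * r₁) := by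
            rw [show 2*j+1 = j + (j+1) from by omega, pow_add, mul_assoc]
        _ = (r₁*r₂)^j * (r₁ * (r₂*r₁)^(j+1)) := by rw [hswap (j+1)]
        _ = (r₁*r₂)^j * (r₁ * ((r₂*r₁) * (r₂*r₁)^j)) := by rw [pow_succ']
        _ = (r₁*r₂)^j * r₁ * r₂ * (r₁ * (r₂*r₁)^j) := by simp only [mul_assoc]
    rw [he]
    exact h2r.conj _

lemma scale_same (x y s : ℝ) (hx : 0 < x) (hy : 0 < y) (hs : 0 < s) (hs2 : s^2 = x*y)
    (i j : ℕ) :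
    ∃ c : ℝ, 0 < c ∧ (if Even i then (1:ℝ) else x/s) * (if Even j then y/s else 1) = c ∧
      (if Even i then y/s else (1:ℝ)) * (if Even j then 1 else x/s) = c := by
  have hxy : (x/s) * (y/s) = 1 := by
    rw [div_mul_div_comm, ← hs2, sq, div_self (by positivity)]
  rcases Nat.even_or_odd i with hi | hi <;> rcases Nat.even_or_odd j with hj | hj
  · exact ⟨y/s, by positivity, by rw [if_pos hi, if_pos hj, one_mul],
      by rw [if_pos hi, if_pos hj, mul_one]⟩
  · refine ⟨1, one_pos, ?_, ?_⟩
    · rw [if_pos hi, if_neg (Nat.not_even_iff_odd.mpr hj), one_mul]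
    · rw [if_pos hi, if_neg (Nat.not_even_iff_odd.mpr hj)]
      rw [mul_comm]; exact hxy
  · refine ⟨1, one_pos, ?_, ?_⟩
    · rw [if_neg (Nat.not_even_iff_odd.mpr hi), if_pos hj]; exact hxy
    · rw [if_neg (Nat.not_even_iff_odd.mpr hi), if_pos hj, one_mul]
  · exact ⟨x/s, by positivity,
      by rw [if_neg (Nat.not_even_iff_odd.mpr hi), if_neg (Nat.not_even_iff_odd.mpr hj), mul_one],
      by rw [if_neg (Nat.not_even_iff_odd.mpr hi), if_neg (Nat.not_even_iff_odd.mpr hj), one_mul]⟩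

lemma scale_cross (x y s : ℝ) (hx : 0 < x) (hy : 0 < y) (hs : 0 < s) (hs2 : s^2 = x*y)
    (i k : ℕ) :
    ∃ c : ℝ, 0 < c ∧ (if Even i then (1:ℝ) else x/s) * (if Even k then 1 else y/s) = c ∧
      (if Even i then y/s else (1:ℝ)) * (if Even k then x/s else 1) = c := by
  have hxy : (x/s) * (y/s) = 1 := by
    rw [div_mul_div_comm, ← hs2, sq, div_self (by positivity)]
  rcases Nat.even_or_odd i with hi | hi <;> rcases Nat.even_or_odd k with hk | hk
  · refine ⟨1, one_pos, ?_, ?_⟩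
    · rw [if_pos hi, if_pos hk, one_mul]
    · rw [if_pos hi, if_pos hk]
      rw [mul_comm]; exact hxy
  · refine ⟨y/s, by positivity, ?_, ?_⟩
    · rw [if_pos hi, if_neg (Nat.not_even_iff_odd.mpr hk), one_mul]
    · rw [if_pos hi, if_neg (Nat.not_even_iff_odd.mpr hk), mul_one]
  · refine ⟨x/s, by positivity, ?_, ?_⟩
    · rw [if_neg (Nat.not_even_iff_odd.mpr hi), if_pos hk, mul_one]
    · rw [if_neg (Nat.not_even_iff_odd.mpr hi), if_pos hk, one_mul]
  · refine ⟨1, one_pos, ?_, ?_⟩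
    · rw [if_neg (Nat.not_even_iff_odd.mpr hi), if_neg (Nat.not_even_iff_odd.mpr hk)]
      exact hxy
    · rw [if_neg (Nat.not_even_iff_odd.mpr hi), if_neg (Nat.not_even_iff_odd.mpr hk), one_mul]


noncomputable def candP (x s : ℝ) (n : ℕ) : ℝ := (if Even n then 1 else x/s) * cheb s (n+1)
noncomputable def candQ (y s : ℝ) (n : ℕ) : ℝ := (if Even n then y/s else 1) * cheb s n

section Master

variable {W' : Subgroup W} {r₁ r₂ : W}

set_option maxHeartbeats 1600000 in
lemma master (hr : r₁ ≠ r₂) (hcan : IsCanonicalGenerators cs g W' {r₁, r₂})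
    (x y s : ℝ) (hx : 0 < x) (hy : 0 < y) (hs : 0 < s) (hs2 : s^2 = x*y)
    (hρ12 : g.ρ r₁ (g.β r₂) = g.β r₂ + x • g.β r₁)
    (hρ21 : g.ρ r₂ (g.β r₁) = g.β r₁ + y • g.β r₂)
    (hρ11 : g.ρ r₁ (g.β r₁) = -(g.β r₁))
    (hρ22 : g.ρ r₂ (g.β r₂) = -(g.β r₂)) :
    (orderOf (r₁*r₂) = 0 ∧ 2 ≤ s ∨
      3 ≤ orderOf (r₁*r₂) ∧ s = 2 * Real.cos (Real.pi / (orderOf (r₁*r₂) : ℝ))) ∧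
    ∀ n : ℕ, (orderOf (r₁*r₂) = 0 ∨ n < orderOf (r₁*r₂)) →
      g.β ((r₁*r₂)^n * r₁) =
        candP x s n • g.β r₁ + candQ y s n • g.β r₂ := by
  classical
  obtain ⟨h1W, h1r⟩ : r₁ ∈ W' ∧ cs.IsReflection r₁ := hcan.1 (by simp)
  obtain ⟨h2W, h2r⟩ : r₂ ∈ W' ∧ cs.IsReflection r₂ := hcan.1 (by simp)
  have hs0 : s ≠ 0 := ne_of_gt hs
  have hCU := coordU g hr hcan
  -- scale positivity
  have hApos : ∀ n : ℕ, 0 < (if Even n then (1:ℝ) else x/s) := by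
    intro n; split <;> positivity
  have hBpos : ∀ n : ℕ, 0 < (if Even n then y/s else (1:ℝ)) := by
    intro n; split <;> positivity
  -- group identities
  have hswap : ∀ j : ℕ, (r₁*r₂)^j * r₁ = r₁ * (r₂*r₁)^j := by
    intro j
    induction j with
    | zero => simp
    | succ j ih =>
        calc (r₁*r₂)^(j+1) * r₁ = ((r₁*r₂)^j * r₁) * (r₂ * r₁) := by
              rw [pow_succ]; group
          _ = (r₁ * (r₂*r₁)^j) * (r₂ * r₁) := by rw [ih]
          _ = r₁ * (r₂*r₁)^(j+1) := by rw [pow_succ]; group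
  have hinvp : ∀ j : ℕ, ((r₁*r₂)^j)⁻¹ = (r₂*r₁)^j := by
    intro j
    have h12 : (r₁*r₂)⁻¹ = r₂*r₁ := by rw [mul_inv_rev, h1r.inv, h2r.inv]
    rw [← inv_pow, h12]
  have hvrefl : ∀ n : ℕ, cs.IsReflection ((r₁*r₂)^n * r₁) := by
    intro n
    rcases Nat.even_or_odd n with ⟨j, hj⟩ | ⟨j, hj⟩
    · have he : (r₁*r₂)^n * r₁ = (r₁*r₂)^j * r₁ * ((r₁*r₂)^j)⁻¹ := by
        rw [hinvp, hj]
        calc (r₁*r₂)^(j+j) * r₁ = (r₁*r₂)^j * ((r₁*r₂)^j * r₁) := by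
              rw [pow_add, mul_assoc]
          _ = (r₁*r₂)^j * (r₁ * (r₂*r₁)^j) := by rw [hswap j]
          _ = (r₁*r₂)^j * r₁ * (r₂*r₁)^j := by simp only [mul_assoc]
      rw [he]
      exact h1r.conj _
    · have he : (r₁*r₂)^n * r₁ = ((r₁*r₂)^j * r₁) * r₂ * ((r₁*r₂)^j * r₁)⁻¹ := by
        rw [mul_inv_rev, hinvp, h1r.inv, hj]
        calc (r₁*r₂)^(2*j+1) * r₁ = (r₁*r₂)^j * ((r₁*r₂)^(j+1) * r₁) := by
              rw [show 2*j+1 = j + (j+1) from by omega, pow_add, mul_assoc]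
          _ = (r₁*r₂)^j * (r₁ * (r₂*r₁)^(j+1)) := by rw [hswap (j+1)]
          _ = (r₁*r₂)^j * (r₁ * ((r₂*r₁) * (r₂*r₁)^j)) := by rw [pow_succ']
          _ = (r₁*r₂)^j * r₁ * r₂ * (r₁ * (r₂*r₁)^j) := by simp only [mul_assoc]
      rw [he]
      exact h2r.conj _
  have hvmem : ∀ n : ℕ, (r₁*r₂)^n * r₁ ∈ W' :=
    fun n => W'.mul_mem (Subgroup.pow_mem _ (W'.mul_mem h1W h2W) n) h1W
  -- the step identity
  have htt : ∀ P Q : ℝ, g.ρ r₁ (g.ρ r₂ (P • g.β r₁ + Q • g.β r₂))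
      = (x*(P*y - Q) - P) • g.β r₁ + (P*y - Q) • g.β r₂ := by
    intro P Q
    have t1 : g.ρ r₂ (P • g.β r₁ + Q • g.β r₂)
        = P • g.β r₁ + (P*y - Q) • g.β r₂ := by
      rw [map_add, map_smul, map_smul, hρ21, hρ22]; module
    rw [t1, map_add, map_smul, map_smul, hρ11, hρ12]; module
  have hyyss : s * (y/s) = y := by rw [mul_comm]; exact div_mul_cancel₀ y hs0
  have hxs : s * (x/s) = x := by rw [mul_comm]; exact div_mul_cancel₀ x hs0
  have hxys : x * (y/s) = s := by
    rw [← mul_div_assoc, ← hs2, sq, mul_div_cancel_right₀ _ hs0]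
  have hxss : (x/s) * y = s := by
    rw [div_mul_eq_mul_div, ← hs2, sq, mul_div_cancel_right₀ _ hs0]
  have hstep : ∀ n : ℕ, g.ρ r₁ (g.ρ r₂ (candP x s n • g.β r₁ + candQ y s n • g.β r₂))
      = candP x s (n+2) • g.β r₁ + candQ y s (n+2) • g.β r₂ := by
    intro n
    have hpar : (Even (n+2)) ↔ (Even n) := by simp [Nat.even_add]
    rw [htt]
    rcases Nat.even_or_odd n with hev | hod
    · rw [candP, candQ, candP, candQ, if_pos hev, if_pos hev,
        if_pos (hpar.mpr hev), if_pos (hpar.mpr hev)]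
      simp only [one_mul]
      rw [show n+3 = (n+1)+2 from rfl, cheb_step s (n+1), cheb_step s n]
      have sc1 : x*(cheb s (n+1)*y - (y/s)*cheb s n) - cheb s (n+1)
          = s*(s*cheb s (n+1) - cheb s n) - cheb s (n+1) := by
        linear_combination (-(cheb s (n+1))) * hs2 + (-(cheb s n)) * hxys
      have sc2 : cheb s (n+1)*y - (y/s)*cheb s n = (y/s)*(s*cheb s (n+1) - cheb s n) := by
        linear_combination (-(cheb s (n+1))) * hyyss
      rw [sc1, sc2]
    · have hodd : ¬ Even n := Nat.not_even_iff_odd.mpr hod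
      have hodd2 : ¬ Even (n+2) := fun h => hodd (hpar.mp h)
      rw [candP, candQ, candP, candQ, if_neg hodd, if_neg hodd,
        if_neg hodd2, if_neg hodd2]
      simp only [one_mul]
      rw [show n+3 = (n+1)+2 from rfl, cheb_step s (n+1), cheb_step s n]
      have sc2 : ((x/s)*cheb s (n+1))*y - cheb s n = s*cheb s (n+1) - cheb s n := by
        linear_combination (cheb s (n+1)) * hxss
      rw [sc2]
      rw [show x*(s*cheb s (n+1) - cheb s n) - (x/s)*cheb s (n+1)
          = (x/s)*(s*(s*cheb s (n+1) - cheb s n) - cheb s (n+1)) from by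
        linear_combination (-(s*cheb s (n+1) - cheb s n)) * hxs]
  have hmulapp : ∀ (a b : W) (v : V), g.ρ (a*b) v = g.ρ a (g.ρ b v) := by
    intro a b v; rw [map_mul]; rfl
  have hiter : ∀ j : ℕ, g.ρ ((r₁*r₂)^j) (candP x s 0 • g.β r₁ + candQ y s 0 • g.β r₂)
      = candP x s (2*j) • g.β r₁ + candQ y s (2*j) • g.β r₂ := by
    intro j
    induction j with
    | zero => simp
    | succ j ih =>
        rw [pow_succ', hmulapp, ih, hmulapp, hstep (2*j),
          show 2*j+2 = 2*(j+1) from by omega]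
  have hσ : ∀ n : ℕ, g.β ((r₁*r₂)^n * r₁) = candP x s n • g.β r₁ + candQ y s n • g.β r₂
      ∨ g.β ((r₁*r₂)^n * r₁) = -(candP x s n • g.β r₁ + candQ y s n • g.β r₂) := by
    intro n
    induction n using Nat.twoStepInduction with
    | zero =>
        left
        rw [pow_zero, one_mul, candP, candQ]
        norm_num
    | one =>
        have hv1 : (r₁*r₂)^1 * r₁ = r₁ * r₂ * r₁⁻¹ := by rw [pow_one, h1r.inv]
        have hc := beta_conj g h2r r₁
        rw [← hv1] at hc
        have hcand : candP x s 1 • g.β r₁ + candQ y s 1 • g.β r₂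
            = x • g.β r₁ + (1:ℝ) • g.β r₂ := by
          rw [candP, candQ]
          norm_num
          rw [div_mul_cancel₀ x hs0]
        rw [hcand]
        rcases hc with h | h
        · left; rw [h, hρ12]; module
        · right; rw [h, hρ12]; module
    | more n ih _ =>
        have h12 : (r₁*r₂)⁻¹ = r₂*r₁ := by rw [mul_inv_rev, h1r.inv, h2r.inv]
        have hview : (r₁*r₂)^(n+2) * r₁ = (r₁*r₂) * ((r₁*r₂)^n * r₁) * (r₁*r₂)⁻¹ := by
          rw [h12, show n+2 = (n+1)+1 from rfl, pow_succ, pow_succ']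
          simp only [mul_assoc]
        have hc := beta_conj g (hvrefl n) (r₁*r₂)
        rw [← hview] at hc
        rcases ih with hn | hn <;> rcases hc with h | h
        · left; rw [h, hn, hmulapp, hstep n]
        · right; rw [h, hn, hmulapp, hstep n]
        · right; rw [h, hn, map_neg, hmulapp, hstep n]
        · left; rw [h, hn, map_neg, hmulapp, hstep n, neg_neg]
  have hpq : ∀ n : ℕ, ∃ p q : ℝ, 0 ≤ p ∧ 0 ≤ q ∧
      g.β ((r₁*r₂)^n * r₁) = p • g.β r₁ + q • g.β r₂ :=
    fun n => cone_pair g hcan (hvmem n) (hvrefl n)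
  have hforce : ∀ n : ℕ, (0 < candP x s n ∨ 0 < candQ y s n) →
      g.β ((r₁*r₂)^n * r₁) = candP x s n • g.β r₁ + candQ y s n • g.β r₂ := by
    intro n hpos
    rcases hσ n with h | h
    · exact h
    · exfalso
      obtain ⟨p, q, hp, hq, he⟩ := hpq n
      rw [h] at he
      have he' : (-(candP x s n)) • g.β r₁ + (-(candQ y s n)) • g.β r₂
          = p • g.β r₁ + q • g.β r₂ := by rw [← he]; module
      obtain ⟨e1, e2⟩ := hCU _ _ _ _ he'
      rcases hpos with h' | h' <;> linarith
  have hmixed : ∀ n : ℕ, candP x s n < 0 → 0 < candQ y s n → False := by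
    intro n h1 h2
    obtain ⟨p, q, hp, hq, he⟩ := hpq n
    rcases hσ n with h | h
    · rw [h] at he
      obtain ⟨e1, e2⟩ := hCU _ _ _ _ he
      linarith
    · rw [h] at he
      have he' : (-(candP x s n)) • g.β r₁ + (-(candQ y s n)) • g.β r₂
          = p • g.β r₁ + q • g.β r₂ := by rw [← he]; module
      obtain ⟨e1, e2⟩ := hCU _ _ _ _ he'
      linarith
  have hrayn : ∀ n : ℕ, candQ y s n = 0 → candP x s n ≠ 0 → (r₁*r₂)^n ≠ 1 → False := by
    intro n hQ0 hP0 hne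
    have htne : (r₁*r₂)^n * r₁ ≠ r₁ := by
      intro h
      apply hne
      have h' : (r₁*r₂)^n * r₁ = 1 * r₁ := by rw [h, one_mul]
      exact mul_right_cancel h'
    rcases hσ n with h | h
    · refine ray_lemma g hcan (hvmem n) (hvrefl n) htne (p := candP x s n) ?_
      rw [h, hQ0, zero_smul, add_zero]
    · refine ray_lemma g hcan (hvmem n) (hvrefl n) htne (p := -(candP x s n)) ?_
      rw [h, hQ0, zero_smul, add_zero, neg_smul]
  by_cases hcase : 2 ≤ s
  · -- hyperbolic/parabolic case: infinite order
    have hm0 : orderOf (r₁*r₂) = 0 := by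
      by_contra h0
      have hm1 : 1 ≤ orderOf (r₁*r₂) := Nat.one_le_iff_ne_zero.mpr h0
      have hv : (r₁*r₂)^(orderOf (r₁*r₂)) * r₁ = r₁ := by
        rw [pow_orderOf_eq_one, one_mul]
      have hβ : g.β r₁ = (1:ℝ) • g.β r₁ + (0:ℝ) • g.β r₂ := by module
      have hQN : 0 < candQ y s (orderOf (r₁*r₂)) := by
        rw [candQ]
        apply mul_pos (hBpos _)
        have h5 := chebA_pos s hcase (orderOf (r₁*r₂) - 1)
        rw [show orderOf (r₁*r₂)-1+1 = orderOf (r₁*r₂) from by omega] at h5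
        linarith
      rcases hσ (orderOf (r₁*r₂)) with h | h
      · rw [hv] at h
        obtain ⟨e1, e2⟩ := hCU 1 0 (candP x s (orderOf (r₁*r₂)))
          (candQ y s (orderOf (r₁*r₂))) (by rw [← hβ]; exact h)
        linarith
      · rw [hv] at h
        obtain ⟨e1, e2⟩ := hCU 1 0 (-(candP x s (orderOf (r₁*r₂))))
          (-(candQ y s (orderOf (r₁*r₂)))) (by rw [← hβ]; exact h.trans (by module))
        linarith
    refine ⟨Or.inl ⟨hm0, hcase⟩, ?_⟩
    intro n _
    apply hforce
    left
    rw [candP]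
    exact mul_pos (hApos n) (by linarith [chebA_pos s hcase n])
  · -- elliptic case
    push_neg at hcase
    set φ := Real.arccos (s/2) with hφdef
    have hφcos : Real.cos φ = s/2 := Real.cos_arccos (by linarith) (by linarith)
    have hφpos : 0 < φ := Real.arccos_pos.mpr (by linarith)
    have hπ := Real.pi_pos
    have hφlt : φ < π/2 := by
      by_contra hcon
      push_neg at hcon
      have h1 : Real.cos φ ≤ 0 :=
        Real.cos_nonpos_of_pi_div_two_le_of_le hcon
          (by linarith [Real.arccos_le_pi (s/2)])
      linarith
    have hsin : 0 < Real.sin φ := Real.sin_pos_of_pos_of_lt_pi hφpos (by linarith)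
    have hscos : s = 2 * Real.cos φ := by rw [hφcos]; ring
    have hcs : ∀ n : ℕ, cheb s n * Real.sin φ = Real.sin (n * φ) := by
      intro n
      rw [hscos]
      exact cheb_sin φ n
    have hwrap : ∀ N : ℕ, 2 ≤ N → π ≤ (N:ℝ)*φ → (N:ℝ)*φ < π + φ →
        (r₁*r₂)^N ≠ 1 → False := by
      intro N hN2 hNlo hNhi hne
      rcases eq_or_lt_of_le hNlo with heq | hlt
      · have hRN : cheb s N = 0 := by
          have h1 := hcs N
          rw [← heq, Real.sin_pi] at h1
          nlinarith
        have hRN1 : cheb s (N+1) < 0 := by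
          have h1 := hcs (N+1)
          have e : ((N+1:ℕ):ℝ)*φ = π + φ := by push_cast; rw [heq]; ring
          rw [e] at h1
          have e2 : Real.sin (π + φ) = -Real.sin φ := by rw [Real.sin_add]; simp
          rw [e2] at h1
          have e3 : (cheb s (N+1) + 1) * Real.sin φ = 0 := by linear_combination h1
          rcases mul_eq_zero.mp e3 with h4 | h4
          · linarith
          · linarith
        apply hrayn N
        · rw [candQ, hRN]; ring
        · rw [candP]
          exact ne_of_lt (mul_neg_of_pos_of_neg (hApos N) hRN1)
        · exact hne
      · have hRN : cheb s N < 0 := by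
          have h1 := hcs N
          have hsn : Real.sin ((N:ℝ)*φ) < 0 := by
            have e : Real.sin ((N:ℝ)*φ - π) = -Real.sin ((N:ℝ)*φ) := by
              rw [Real.sin_sub]; simp
            have hp : 0 < Real.sin ((N:ℝ)*φ - π) :=
              Real.sin_pos_of_pos_of_lt_pi (by linarith) (by linarith)
            linarith
          nlinarith
        have hRN1 : 0 < cheb s (N-1) := by
          have h1 := hcs (N-1)
          have e : ((N-1:ℕ):ℝ) = (N:ℝ) - 1 := by
            rw [Nat.cast_sub (by omega)]; norm_num
          rw [e] at h1
          have e2 : ((N:ℝ)-1)*φ = (N:ℝ)*φ - φ := by ring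
          have hsp : 0 < Real.sin (((N:ℝ)-1)*φ) := by
            rw [e2]
            exact Real.sin_pos_of_pos_of_lt_pi (by linarith) (by linarith)
          nlinarith
        apply hmixed (N-1)
        · rw [candP, show N-1+1 = N from by omega]
          exact mul_neg_of_pos_of_neg (hApos (N-1)) hRN
        · rw [candQ]
          exact mul_pos (hBpos (N-1)) hRN1
    have hex : ∃ N : ℕ, π ≤ (N:ℝ)*φ := by
      obtain ⟨N, hN⟩ := exists_nat_ge (π/φ)
      exact ⟨N, by rw [div_le_iff₀ hφpos] at hN; linarith⟩
    have hspec : π ≤ ((Nat.find hex:ℕ):ℝ)*φ := Nat.find_spec hex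
    have hN₀2 : 2 ≤ Nat.find hex := by
      by_contra hcon
      push_neg at hcon
      have hd : Nat.find hex = 0 ∨ Nat.find hex = 1 := by omega
      rcases hd with h0 | h1
      · rw [h0] at hspec; norm_num at hspec; linarith
      · rw [h1] at hspec; norm_num at hspec; linarith
    have hmin := Nat.find_min hex (show Nat.find hex - 1 < Nat.find hex from by omega)
    have hhi : ((Nat.find hex:ℕ):ℝ)*φ < π + φ := by
      push_neg at hmin
      have e : ((Nat.find hex-1:ℕ):ℝ) = ((Nat.find hex:ℕ):ℝ)-1 := by
        rw [Nat.cast_sub (by omega)]; norm_num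
      rw [e] at hmin
      nlinarith
    have hm0 : orderOf (r₁*r₂) ≠ 0 := by
      intro h0
      exact hwrap (Nat.find hex) hN₀2 hspec hhi
        (orderOf_eq_zero_iff'.mp h0 (Nat.find hex) (by omega))
    have hpowm : (r₁*r₂)^(orderOf (r₁*r₂)) = 1 := pow_orderOf_eq_one _
    have hm1 : orderOf (r₁*r₂) ≠ 1 := by
      intro h1
      rw [h1, pow_one] at hpowm
      apply hr
      have h2 : r₁⁻¹ = r₂ := inv_eq_of_mul_eq_one_right hpowm
      rw [h1r.inv] at h2
      exact h2
    have hm2 : orderOf (r₁*r₂) ≠ 2 := by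
      intro h2
      have hpow2 : (r₁*r₂)^2 = 1 := by rw [← h2]; exact hpowm
      have hv1 : (r₁*r₂)^1 * r₁ = r₂ := by
        rw [pow_one]
        have e : r₁*r₂*(r₁*r₂) = 1 := by rw [← pow_two]; exact hpow2
        calc r₁*r₂*r₁ = (r₁*r₂*(r₁*r₂))*r₂⁻¹ := by group
          _ = r₂⁻¹ := by rw [e, one_mul]
          _ = r₂ := h2r.inv
      have hβ2 : g.β r₂ = (0:ℝ) • g.β r₁ + (1:ℝ) • g.β r₂ := by module
      have hc1P : candP x s 1 = x := by
        rw [candP]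
        norm_num
        rw [div_mul_cancel₀ x hs0]
      have hc1Q : candQ y s 1 = 1 := by rw [candQ]; norm_num
      rcases hσ 1 with h | h
      · rw [hv1, hc1P, hc1Q] at h
        obtain ⟨e1, e2⟩ := hCU 0 1 x 1 (by rw [← hβ2]; exact h)
        linarith
      · rw [hv1, hc1P, hc1Q] at h
        obtain ⟨e1, e2⟩ := hCU 0 1 (-x) (-1)
          (by rw [← hβ2]; exact h.trans (by module))
        linarith
    have hm3 : 3 ≤ orderOf (r₁*r₂) := by omega
    have hmr : (0:ℝ) < (orderOf (r₁*r₂) : ℝ) := by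
      exact_mod_cast (by omega : 0 < orderOf (r₁*r₂))
    have hpowv : g.ρ ((r₁*r₂)^(orderOf (r₁*r₂)))
        (candP x s 0 • g.β r₁ + candQ y s 0 • g.β r₂)
        = candP x s 0 • g.β r₁ + candQ y s 0 • g.β r₂ := by
      rw [hpowm, map_one]
      rfl
    have h2m := hiter (orderOf (r₁*r₂))
    rw [hpowv] at h2m
    have hP0 : candP x s 0 = 1 := by rw [candP]; norm_num
    have hQ0 : candQ y s 0 = 0 := by rw [candQ]; norm_num
    have hP2m : candP x s (2*(orderOf (r₁*r₂))) = cheb s (2*(orderOf (r₁*r₂))+1) := by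
      rw [candP, if_pos (even_two_mul _), one_mul]
    have hQ2m : candQ y s (2*(orderOf (r₁*r₂)))
        = (y/s) * cheb s (2*(orderOf (r₁*r₂))) := by
      rw [candQ, if_pos (even_two_mul _)]
    rw [hP0, hQ0, hP2m, hQ2m] at h2m
    obtain ⟨e1, e2⟩ := hCU _ _ _ _ h2m
    have hR2m1 : cheb s (2*(orderOf (r₁*r₂))+1) = 1 := e1.symm
    have hR2m : cheb s (2*(orderOf (r₁*r₂))) = 0 := by
      have hys : y/s ≠ 0 := by positivity
      rcases mul_eq_zero.mp e2.symm with h | h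
      · exact absurd h hys
      · exact h
    have hsin2m : Real.sin (((2*(orderOf (r₁*r₂)):ℕ):ℝ)*φ) = 0 := by
      have h1 := hcs (2*(orderOf (r₁*r₂)))
      rw [hR2m, zero_mul] at h1
      exact h1.symm
    obtain ⟨K, hK⟩ := Real.sin_eq_zero_iff.mp hsin2m
    have hcast2m : ((2*(orderOf (r₁*r₂)):ℕ):ℝ) = 2*((orderOf (r₁*r₂)):ℝ) := by
      push_cast; ring
    have hKpos : 0 < K := by
      have h1 : (0:ℝ) < (K:ℝ)*π := by
        rw [hK, hcast2m]
        positivity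
      by_contra hcon
      push_neg at hcon
      have h2 : (K:ℝ) ≤ 0 := by exact_mod_cast hcon
      nlinarith
    have hKm : (K:ℝ) < (orderOf (r₁*r₂):ℝ) := by
      have h1 : 2*((orderOf (r₁*r₂)):ℝ)*φ < 2*((orderOf (r₁*r₂)):ℝ)*(π/2) :=
        mul_lt_mul_of_pos_left hφlt (by positivity)
      rw [← hcast2m] at h1
      rw [← hK] at h1
      nlinarith
    have hKeven : ∃ k : ℤ, K = 2*k := by
      rcases Int.even_or_odd K with ⟨k, hk⟩ | ⟨k, hk⟩
      · exact ⟨k, by omega⟩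
      · exfalso
        have hKr : (K:ℝ) = 2*(k:ℝ)+1 := by exact_mod_cast hk
        have e : ((2*(orderOf (r₁*r₂))+1:ℕ):ℝ)*φ = (π + φ) + (k:ℝ)*(2*π) := by
          push_cast
          have h1 : (K:ℝ)*π = 2*((orderOf (r₁*r₂)):ℝ)*φ := by rw [hK, hcast2m]
          rw [hKr] at h1
          linarith
        have h1 := hcs (2*(orderOf (r₁*r₂))+1)
        rw [hR2m1, one_mul, e, Real.sin_add_int_mul_two_pi] at h1
        have e2 : Real.sin (π + φ) = -Real.sin φ := by rw [Real.sin_add]; simp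
        rw [e2] at h1
        linarith
    obtain ⟨k, rfl⟩ := hKeven
    have hφeq : ((orderOf (r₁*r₂)):ℝ)*φ = (k:ℝ)*π := by
      have h1 : ((2*k:ℤ):ℝ)*π = 2*((orderOf (r₁*r₂)):ℝ)*φ := by rw [hK, hcast2m]
      push_cast at h1
      linarith
    have hk1 : 1 ≤ k := by
      have : (0:ℤ) < 2*k := hKpos
      omega
    have h2km : 2*(k:ℝ) < (orderOf (r₁*r₂):ℝ) := by
      have := hKm
      push_cast at this
      linarith
    have hkone : k = 1 := by
      by_contra hcon
      have hk2 : (2:ℝ) ≤ (k:ℝ) := by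
        have : 2 ≤ k := by omega
        exact_mod_cast this
      have hNm : ((Nat.find hex:ℕ):ℝ) < (orderOf (r₁*r₂):ℝ) := by
        have e1 : ((Nat.find hex:ℕ):ℝ) * ((k:ℝ)*π)
            = (((Nat.find hex:ℕ):ℝ)*φ)*((orderOf (r₁*r₂)):ℝ) := by
          rw [← hφeq]; ring
        have e2 : ((orderOf (r₁*r₂)):ℝ)*π + (k:ℝ)*π
            = (π+φ)*((orderOf (r₁*r₂)):ℝ) := by
          rw [← hφeq]; ring
        have h1 : ((Nat.find hex:ℕ):ℝ) * ((k:ℝ)*π)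
            < ((orderOf (r₁*r₂)):ℝ)*π + (k:ℝ)*π := by
          rw [e1, e2]
          exact mul_lt_mul_of_pos_right hhi hmr
        have hNk : ((Nat.find hex:ℕ):ℝ)*(k:ℝ) < ((orderOf (r₁*r₂)):ℝ) + (k:ℝ) := by
          by_contra hcon2
          push_neg at hcon2
          have h3 := mul_le_mul_of_nonneg_right hcon2 (le_of_lt hπ)
          nlinarith
        by_contra hcon2
        push_neg at hcon2
        have h4 : 0 ≤ (k:ℝ) := by positivity
        have h5 := mul_le_mul_of_nonneg_right hcon2 h4
        nlinarith
      have hne : (r₁*r₂)^(Nat.find hex) ≠ 1 := by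
        intro hp1
        have hdvd : orderOf (r₁*r₂) ∣ Nat.find hex := orderOf_dvd_of_pow_eq_one hp1
        have hle : orderOf (r₁*r₂) ≤ Nat.find hex := Nat.le_of_dvd (by omega) hdvd
        have : ((orderOf (r₁*r₂)):ℝ) ≤ ((Nat.find hex:ℕ):ℝ) := by exact_mod_cast hle
        linarith
      exact hwrap (Nat.find hex) hN₀2 hspec hhi hne
    subst hkone
    have hφpi : φ = π/((orderOf (r₁*r₂)):ℝ) := by
      rw [eq_div_iff (ne_of_gt hmr)]
      push_cast at hφeq
      linarith
    refine ⟨Or.inr ⟨hm3, by rw [hscos, hφpi]⟩, ?_⟩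
    intro n hn
    rcases hn with h0 | hnm
    · exact absurd h0 hm0
    apply hforce
    rcases Nat.eq_zero_or_pos n with rfl | hn1
    · left; rw [hP0]; norm_num
    · right
      rw [candQ]
      apply mul_pos (hBpos n)
      have := chebB_pos hm3 hn1 hnm
      rwa [hscos, hφpi]

end Master


end OmegaAux

/-- Let `W'` be a generalized rank two parabolic subgroup with canonical
generators `r₁, r₂`, whose reflections are ordered `u₁ = r₁, u₂ = r₁r₂r₁, …, u_m = r₂`,
and let `ω_c` be the antisymmetrized Euler form.  If `ω_c(β_{u₁}, β_{u_m}) = 0` then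
`ω_c(β_{u_i}, β_{u_j}) = 0` for all `i, j`; if `ω_c(β_{u₁}, β_{u_m}) < 0` then
`ω_c(β_{u_i}, β_{u_j}) < 0` for all `i < j`; and if `ω_c(β_{u₁}, β_{u_m}) > 0` then
`ω_c(β_{u_i}, β_{u_j}) > 0` for all `i < j`. -/
theorem omega_cyclic
    {B W V : Type*} [Group W] [AddCommGroup V] [Module ℝ V]
    {M : CoxeterMatrix B} (cs : CoxeterSystem M W) (g : CoxeterGeomRep M cs V)
    (l : List B) (hnd : l.Nodup) (hall : ∀ b : B, b ∈ l)
    (F : V →ₗ[ℝ] V →ₗ[ℝ] ℝ) (hF : IsEulerForm cs g l F)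
    (W' : Subgroup W)
    (hW' : ∃ t₁ t₂ : W, cs.IsReflection t₁ ∧ cs.IsReflection t₂ ∧ t₁ ≠ t₂ ∧
      W' = Subgroup.closure
        {t | cs.IsReflection t ∧ g.β t ∈ Submodule.span ℝ {g.β t₁, g.β t₂}})
    (r₁ r₂ : W) (hr : r₁ ≠ r₂)
    (hcan : IsCanonicalGenerators cs g W' {r₁, r₂}) :
    (F (g.β r₁) (g.β r₂) - F (g.β r₂) (g.β r₁) = 0 →
      ∀ x y : ℕ ⊕ ℕ, DihedralIdx (orderOf (r₁ * r₂)) x →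
        DihedralIdx (orderOf (r₁ * r₂)) y →
        F (g.β (dihedralRefl r₁ r₂ x)) (g.β (dihedralRefl r₁ r₂ y)) -
          F (g.β (dihedralRefl r₁ r₂ y)) (g.β (dihedralRefl r₁ r₂ x)) = 0) ∧
    (F (g.β r₁) (g.β r₂) - F (g.β r₂) (g.β r₁) < 0 →
      ∀ x y : ℕ ⊕ ℕ, DihedralBefore (orderOf (r₁ * r₂)) x y →
        F (g.β (dihedralRefl r₁ r₂ x)) (g.β (dihedralRefl r₁ r₂ y)) -
          F (g.β (dihedralRefl r₁ r₂ y)) (g.β (dihedralRefl r₁ r₂ x)) < 0) ∧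
    (0 < F (g.β r₁) (g.β r₂) - F (g.β r₂) (g.β r₁) →
      ∀ x y : ℕ ⊕ ℕ, DihedralBefore (orderOf (r₁ * r₂)) x y →
        0 < F (g.β (dihedralRefl r₁ r₂ x)) (g.β (dihedralRefl r₁ r₂ y)) -
          F (g.β (dihedralRefl r₁ r₂ y)) (g.β (dihedralRefl r₁ r₂ x))) := by
  classical
  clear hnd hall hF hW'
  obtain ⟨h1W, h1r⟩ : r₁ ∈ W' ∧ cs.IsReflection r₁ := hcan.1 (by simp)
  obtain ⟨h2W, h2r⟩ : r₂ ∈ W' ∧ cs.IsReflection r₂ := hcan.1 (by simp)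
  have hcan' : IsCanonicalGenerators cs g W' {r₂, r₁} := by rwa [Set.pair_comm r₂ r₁]
  have hCU := OmegaAux.coordU g hr hcan
  have hω : ∀ p q p' q' : ℝ, ∀ u v : V, u = p • g.β r₁ + q • g.β r₂ →
      v = p' • g.β r₁ + q' • g.β r₂ →
      F u v - F v u = (p*q' - q*p') * (F (g.β r₁) (g.β r₂) - F (g.β r₂) (g.β r₁)) := by
    intro p q p' q' u v hu hv
    subst hu hv
    simp only [map_add, map_smul, LinearMap.add_apply, LinearMap.smul_apply, smul_eq_mul]
    ring
  have hdr : ∀ X : ℕ ⊕ ℕ, cs.IsReflection (dihedralRefl r₁ r₂ X)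
      ∧ dihedralRefl r₁ r₂ X ∈ W' := by
    intro X
    rcases X with i | k
    · exact ⟨OmegaAux.vrefl h1r h2r i,
        W'.mul_mem (Subgroup.pow_mem _ (W'.mul_mem h1W h2W) i) h1W⟩
    · exact ⟨OmegaAux.vrefl h2r h1r k,
        W'.mul_mem (Subgroup.pow_mem _ (W'.mul_mem h2W h1W) k) h2W⟩
  have hcone : ∀ X : ℕ ⊕ ℕ, ∃ p q : ℝ,
      g.β (dihedralRefl r₁ r₂ X) = p • g.β r₁ + q • g.β r₂ := by
    intro X
    obtain ⟨p, q, _, _, h⟩ := OmegaAux.cone_pair g hcan (hdr X).2 (hdr X).1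
    exact ⟨p, q, h⟩
  have hord : orderOf (r₂*r₁) = orderOf (r₁*r₂) := by
    apply orderOf_eq_orderOf_iff.mpr
    intro n
    have e : (r₂*r₁)^n = r₁⁻¹ * ((r₁*r₂)^n) * r₁ := by
      induction n with
      | zero => simp
      | succ n ih =>
          rw [pow_succ, pow_succ, ih]
          group
    rw [e]
    constructor
    · intro h
      calc (r₁*r₂)^n = r₁ * (r₁⁻¹ * ((r₁*r₂)^n) * r₁) * r₁⁻¹ := by group
        _ = r₁ * 1 * r₁⁻¹ := by rw [h]
        _ = 1 := by group
    · intro h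
      rw [h]
      group
  -- the key determinant fact
  have key : ∀ X Y : ℕ ⊕ ℕ, DihedralBefore (orderOf (r₁*r₂)) X Y →
      ∃ p q p' q' : ℝ, g.β (dihedralRefl r₁ r₂ X) = p • g.β r₁ + q • g.β r₂ ∧
        g.β (dihedralRefl r₁ r₂ Y) = p' • g.β r₁ + q' • g.β r₂ ∧
        0 < p*q' - q*p' := by
    obtain ⟨φ₁, hφ₁2, hφ₁⟩ := OmegaAux.rho_reflection g h1r
    obtain ⟨φ₂, hφ₂2, hφ₂⟩ := OmegaAux.rho_reflection g h2r
    have hρ11 : g.ρ r₁ (g.β r₁) = -(g.β r₁) := by rw [hφ₁ (g.β r₁), hφ₁2]; module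
    have hρ22 : g.ρ r₂ (g.β r₂) = -(g.β r₂) := by rw [hφ₂ (g.β r₂), hφ₂2]; module
    set x := -(φ₁ (g.β r₂)) with hxdef
    set y := -(φ₂ (g.β r₁)) with hydef
    have hρ12 : g.ρ r₁ (g.β r₂) = g.β r₂ + x • g.β r₁ := by
      rw [hφ₁ (g.β r₂), hxdef]; module
    have hρ21 : g.ρ r₂ (g.β r₁) = g.β r₁ + y • g.β r₂ := by
      rw [hφ₂ (g.β r₁), hydef]; module
    have hv1refl : cs.IsReflection (r₁*r₂*r₁) := by
      have e : r₁*r₂*r₁ = r₁*r₂*r₁⁻¹ := by rw [h1r.inv]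
      rw [e]; exact h2r.conj r₁
    have hv1mem : r₁*r₂*r₁ ∈ W' := W'.mul_mem (W'.mul_mem h1W h2W) h1W
    obtain ⟨hβv1, hx0⟩ : g.β (r₁*r₂*r₁) = x • g.β r₁ + (1:ℝ) • g.β r₂ ∧ 0 ≤ x := by
      have hc := OmegaAux.beta_conj g h2r r₁
      rw [h1r.inv] at hc
      obtain ⟨p, q, hp, hq, hco⟩ := OmegaAux.cone_pair g hcan hv1mem hv1refl
      rcases hc with h | h
      · rw [hρ12] at h
        have h' : p • g.β r₁ + q • g.β r₂ = x • g.β r₁ + (1:ℝ) • g.β r₂ :=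
          hco.symm.trans (h.trans (by module))
        obtain ⟨e1, e2⟩ := hCU _ _ _ _ h'
        exact ⟨hco.trans (by rw [e1, e2]), by rw [← e1]; exact hp⟩
      · rw [hρ12] at h
        have h' : p • g.β r₁ + q • g.β r₂ = (-x) • g.β r₁ + (-1:ℝ) • g.β r₂ :=
          hco.symm.trans (h.trans (by module))
        obtain ⟨e1, e2⟩ := hCU _ _ _ _ h'
        linarith
    have hw1refl : cs.IsReflection (r₂*r₁*r₂) := by
      have e : r₂*r₁*r₂ = r₂*r₁*r₂⁻¹ := by rw [h2r.inv]
      rw [e]; exact h1r.conj r₂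
    have hw1mem : r₂*r₁*r₂ ∈ W' := W'.mul_mem (W'.mul_mem h2W h1W) h2W
    obtain ⟨hβw1, hy0⟩ : g.β (r₂*r₁*r₂) = (1:ℝ) • g.β r₁ + y • g.β r₂ ∧ 0 ≤ y := by
      have hc := OmegaAux.beta_conj g h1r r₂
      rw [h2r.inv] at hc
      obtain ⟨p, q, hp, hq, hco⟩ := OmegaAux.cone_pair g hcan hw1mem hw1refl
      rcases hc with h | h
      · rw [hρ21] at h
        have h' : p • g.β r₁ + q • g.β r₂ = (1:ℝ) • g.β r₁ + y • g.β r₂ :=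
          hco.symm.trans (h.trans (by module))
        obtain ⟨e1, e2⟩ := hCU _ _ _ _ h'
        exact ⟨hco.trans (by rw [e1, e2]), by rw [← e2]; exact hq⟩
      · rw [hρ21] at h
        have h' : p • g.β r₁ + q • g.β r₂ = (-1:ℝ) • g.β r₁ + (-y) • g.β r₂ :=
          hco.symm.trans (h.trans (by module))
        obtain ⟨e1, e2⟩ := hCU _ _ _ _ h'
        linarith
    by_cases hm2 : orderOf (r₁*r₂) = 2
    · have hpow2 : (r₁*r₂)^2 = 1 := by rw [← hm2]; exact pow_orderOf_eq_one _
      have hv1 : r₁*r₂*r₁ = r₂ := by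
        have e : r₁*r₂*(r₁*r₂) = 1 := by rw [← pow_two]; exact hpow2
        calc r₁*r₂*r₁ = (r₁*r₂*(r₁*r₂))*r₂⁻¹ := by group
          _ = r₂⁻¹ := by rw [e, one_mul]
          _ = r₂ := h2r.inv
      have hw2 : (r₂*r₁)^2 = 1 := by
        have e : (r₂*r₁)^2 = r₂*((r₁*r₂)^2)*r₂⁻¹ := by
          rw [pow_two, pow_two]; group
        rw [e, hpow2, mul_one, mul_inv_cancel]
      have hw1 : r₂*r₁*r₂ = r₁ := by
        have e : r₂*r₁*(r₂*r₁) = 1 := by rw [← pow_two]; exact hw2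
        calc r₂*r₁*r₂ = (r₂*r₁*(r₂*r₁))*r₁⁻¹ := by group
          _ = r₁⁻¹ := by rw [e, one_mul]
          _ = r₁ := h1r.inv
      have hβ1c : g.β r₁ = (1:ℝ) • g.β r₁ + (0:ℝ) • g.β r₂ := by module
      have hβ2c : g.β r₂ = (0:ℝ) • g.β r₁ + (1:ℝ) • g.β r₂ := by module
      intro X Y hB
      rw [hm2] at hB
      rcases X with i | k <;> rcases Y with j | k'
      · obtain ⟨hi, hj⟩ : i = 0 ∧ j = 1 := by
          rcases hB with ⟨a, b | b⟩ <;> omega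
        subst hi; subst hj
        refine ⟨1, 0, 0, 1, ?_, ?_, by norm_num⟩
        · simp only [dihedralRefl, pow_zero, one_mul]
          exact hβ1c
        · rw [show dihedralRefl r₁ r₂ (.inl 1) = r₂ from by
            simp only [dihedralRefl, pow_one]; exact hv1]
          exact hβ2c
      · obtain ⟨hi, hk⟩ : i = 0 ∧ k' = 0 := by
          rcases hB with b | ⟨b1, b2⟩ <;> omega
        subst hi; subst hk
        refine ⟨1, 0, 0, 1, ?_, ?_, by norm_num⟩
        · simp only [dihedralRefl, pow_zero, one_mul]; exact hβ1c
        · simp only [dihedralRefl, pow_zero, one_mul]; exact hβ2c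
      · obtain ⟨hj, hk⟩ : j = 1 ∧ k = 1 := by
          obtain ⟨b1, b2, b3, b4⟩ := hB; omega
        subst hj; subst hk
        refine ⟨1, 0, 0, 1, ?_, ?_, by norm_num⟩
        · rw [show dihedralRefl r₁ r₂ (.inr 1) = r₁ from by
            simp only [dihedralRefl, pow_one]; exact hw1]
          exact hβ1c
        · rw [show dihedralRefl r₁ r₂ (.inl 1) = r₂ from by
            simp only [dihedralRefl, pow_one]; exact hv1]
          exact hβ2c
      · obtain ⟨hk, hk'⟩ : k = 1 ∧ k' = 0 := by
          rcases hB with ⟨a, b | b⟩ <;> omega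
        subst hk; subst hk'
        refine ⟨1, 0, 0, 1, ?_, ?_, by norm_num⟩
        · rw [show dihedralRefl r₁ r₂ (.inr 1) = r₁ from by
            simp only [dihedralRefl, pow_one]; exact hw1]
          exact hβ1c
        · simp only [dihedralRefl, pow_zero, one_mul]; exact hβ2c
    · have hmne1 : orderOf (r₁*r₂) ≠ 1 := by
        intro h1
        apply hr
        have h0 := orderOf_eq_one_iff.mp h1
        have h2 : r₁⁻¹ = r₂ := inv_eq_of_mul_eq_one_right h0
        rw [h1r.inv] at h2
        exact h2
      have hx : 0 < x := by
        rcases eq_or_lt_of_le hx0 with h0 | h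
        · exfalso
          have hroot : g.β (r₁*r₂*r₁) = (1:ℝ) • g.β r₂ := by
            rw [hβv1, ← h0]; module
          by_cases hv12 : r₁*r₂*r₁ = r₂
          · apply hm2
            have e : (r₁*r₂)^2 = 1 := by
              have e1 : r₁*r₂*r₁*r₂ = r₂*r₂ := by rw [hv12]
              have h22 : r₂*r₂ = 1 := h2r.mul_self
              rw [pow_two]
              calc r₁*r₂*(r₁*r₂) = r₁*r₂*r₁*r₂ := by group
                _ = 1 := by rw [e1, h22]
            have hdvd := orderOf_dvd_of_pow_eq_one e
            have hle : orderOf (r₁*r₂) ≤ 2 := Nat.le_of_dvd (by norm_num) hdvd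
            have hne0 : orderOf (r₁*r₂) ≠ 0 := by
              intro hz
              rw [hz] at hdvd
              exact absurd (Nat.eq_zero_of_zero_dvd hdvd) (by norm_num)
            omega
          · exact OmegaAux.ray_lemma g hcan' hv1mem hv1refl hv12 hroot
        · exact h
      have hy : 0 < y := by
        rcases eq_or_lt_of_le hy0 with h0 | h
        · exfalso
          have hroot : g.β (r₂*r₁*r₂) = (1:ℝ) • g.β r₁ := by
            rw [hβw1, ← h0]; module
          by_cases hw12 : r₂*r₁*r₂ = r₁
          · apply hm2
            have e : (r₂*r₁)^2 = 1 := by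
              have h11 : r₁*r₁ = 1 := h1r.mul_self
              rw [pow_two]
              calc r₂*r₁*(r₂*r₁) = (r₂*r₁*r₂)*r₁ := by group
                _ = r₁*r₁ := by rw [hw12]
                _ = 1 := h11
            have e2 : (r₁*r₂)^2 = 1 := by
              have e3 : (r₁*r₂)^2 = r₁*((r₂*r₁)^2)*r₁⁻¹ := by rw [pow_two, pow_two]; group
              rw [e3, e, mul_one, mul_inv_cancel]
            have hdvd := orderOf_dvd_of_pow_eq_one e2
            have hle : orderOf (r₁*r₂) ≤ 2 := Nat.le_of_dvd (by norm_num) hdvd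
            have hne0 : orderOf (r₁*r₂) ≠ 0 := by
              intro hz
              rw [hz] at hdvd
              exact absurd (Nat.eq_zero_of_zero_dvd hdvd) (by norm_num)
            omega
          · exact OmegaAux.ray_lemma g hcan hw1mem hw1refl hw12 hroot
        · exact h
      set s := Real.sqrt (x*y) with hsdef
      have hs : 0 < s := Real.sqrt_pos.mpr (by positivity)
      have hs2 : s^2 = x*y := Real.sq_sqrt (by positivity)
      obtain ⟨hdich1, hco1⟩ :=
        OmegaAux.master g hr hcan x y s hx hy hs hs2 hρ12 hρ21 hρ11 hρ22
      obtain ⟨_, hco2'⟩ := OmegaAux.master g hr.symm hcan' y x s hy hx hs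
        (by rw [hs2]; ring) hρ21 hρ12 hρ22 hρ11
      have hco2 : ∀ k : ℕ, (orderOf (r₁*r₂) = 0 ∨ k < orderOf (r₁*r₂)) →
          g.β ((r₂*r₁)^k * r₂)
            = OmegaAux.candQ x s k • g.β r₁ + OmegaAux.candP y s k • g.β r₂ := by
        intro k hk
        have hval : orderOf (r₂*r₁) = 0 ∨ k < orderOf (r₂*r₁) := by
          rw [hord]; exact hk
        exact (hco2' k hval).trans (by module)
      intro X Y hB
      rcases hdich1 with ⟨hm0, hsA⟩ | ⟨hm3, hsB⟩
      · -- infinite order case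
        have hch0 : ∀ n, 0 ≤ OmegaAux.cheb s n := fun n => (OmegaAux.chebA s hsA n).1
        have hchm : ∀ n, OmegaAux.cheb s n + 1 ≤ OmegaAux.cheb s (n+1) :=
          fun n => (OmegaAux.chebA s hsA n).2
        have hch1 : ∀ n, 1 ≤ OmegaAux.cheb s (n+1) := OmegaAux.chebA_pos s hsA
        have hposd : ∀ d : ℕ, 0 < d → 0 < OmegaAux.cheb s d := by
          intro d hd
          have h5 := hch1 (d-1)
          rw [show d-1+1 = d from by omega] at h5
          linarith
        have hprod : ∀ i k : ℕ, 0 < OmegaAux.cheb s (i+1) * OmegaAux.cheb s (k+1)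
            - OmegaAux.cheb s i * OmegaAux.cheb s k := by
          intro i k
          have h4 := mul_le_mul (hchm i) (hchm k) (by linarith [hch0 k])
            (by linarith [hch0 i, hchm i])
          nlinarith [hch0 i, hch0 k]
        rcases X with i | k <;> rcases Y with j | k'
        · obtain ⟨hij, _⟩ := hB
          refine ⟨OmegaAux.candP x s i, OmegaAux.candQ y s i, OmegaAux.candP x s j,
            OmegaAux.candQ y s j, ?_, ?_, ?_⟩
          · simpa only [dihedralRefl] using hco1 i (Or.inl hm0)
          · simpa only [dihedralRefl] using hco1 j (Or.inl hm0)
          · obtain ⟨c, hc, hc1, hc2⟩ := OmegaAux.scale_same x y s hx hy hs hs2 i j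
            have e : OmegaAux.candP x s i * OmegaAux.candQ y s j
                - OmegaAux.candQ y s i * OmegaAux.candP x s j
                = c * (OmegaAux.cheb s (i+1) * OmegaAux.cheb s j
                  - OmegaAux.cheb s i * OmegaAux.cheb s (j+1)) := by
              simp only [OmegaAux.candP, OmegaAux.candQ]
              linear_combination (OmegaAux.cheb s (i+1) * OmegaAux.cheb s j) * hc1
                - (OmegaAux.cheb s i * OmegaAux.cheb s (j+1)) * hc2
            rw [e]
            obtain ⟨d, hd, hd0⟩ : ∃ d, j = i + d ∧ 0 < d := ⟨j - i, by omega, by omega⟩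
            have e2 : OmegaAux.cheb s (i+1) * OmegaAux.cheb s j
                - OmegaAux.cheb s i * OmegaAux.cheb s (j+1) = OmegaAux.cheb s d := by
              rw [hd]
              linear_combination OmegaAux.cheb_det s d i
            rw [e2]
            exact mul_pos hc (hposd d hd0)
        · refine ⟨OmegaAux.candP x s i, OmegaAux.candQ y s i, OmegaAux.candQ x s k',
            OmegaAux.candP y s k', ?_, ?_, ?_⟩
          · simpa only [dihedralRefl] using hco1 i (Or.inl hm0)
          · simpa only [dihedralRefl] using hco2 k' (Or.inl hm0)
          · obtain ⟨c, hc, hc1, hc2⟩ := OmegaAux.scale_cross x y s hx hy hs hs2 i k'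
            have e : OmegaAux.candP x s i * OmegaAux.candP y s k'
                - OmegaAux.candQ y s i * OmegaAux.candQ x s k'
                = c * (OmegaAux.cheb s (i+1) * OmegaAux.cheb s (k'+1)
                  - OmegaAux.cheb s i * OmegaAux.cheb s k') := by
              simp only [OmegaAux.candP, OmegaAux.candQ]
              linear_combination (OmegaAux.cheb s (i+1) * OmegaAux.cheb s (k'+1)) * hc1
                - (OmegaAux.cheb s i * OmegaAux.cheb s k') * hc2
            rw [e]
            exact mul_pos hc (hprod i k')
        · exact absurd hm0 hB.1
        · obtain ⟨hkk, _⟩ := hB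
          refine ⟨OmegaAux.candQ x s k, OmegaAux.candP y s k, OmegaAux.candQ x s k',
            OmegaAux.candP y s k', ?_, ?_, ?_⟩
          · simpa only [dihedralRefl] using hco2 k (Or.inl hm0)
          · simpa only [dihedralRefl] using hco2 k' (Or.inl hm0)
          · obtain ⟨c, hc, hc1, hc2⟩ :=
              OmegaAux.scale_same y x s hy hx hs (by rw [hs2]; ring) k k'
            have e : OmegaAux.candQ x s k * OmegaAux.candP y s k'
                - OmegaAux.candP y s k * OmegaAux.candQ x s k'
                = c * (OmegaAux.cheb s k * OmegaAux.cheb s (k'+1)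
                  - OmegaAux.cheb s (k+1) * OmegaAux.cheb s k') := by
              simp only [OmegaAux.candP, OmegaAux.candQ]
              linear_combination (OmegaAux.cheb s k * OmegaAux.cheb s (k'+1)) * hc2
                - (OmegaAux.cheb s (k+1) * OmegaAux.cheb s k') * hc1
            rw [e]
            obtain ⟨d, hd, hd0⟩ : ∃ d, k = k' + d ∧ 0 < d := ⟨k - k', by omega, by omega⟩
            have e2 : OmegaAux.cheb s k * OmegaAux.cheb s (k'+1)
                - OmegaAux.cheb s (k+1) * OmegaAux.cheb s k' = OmegaAux.cheb s d := by
              rw [hd]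
              linear_combination OmegaAux.cheb_det s d k'
            rw [e2]
            exact mul_pos hc (hposd d hd0)
      · -- finite order case
        have hm0' : orderOf (r₁*r₂) ≠ 0 := by omega
        have hposd : ∀ d : ℕ, 0 < d → d < orderOf (r₁*r₂) → 0 < OmegaAux.cheb s d := by
          intro d hd1 hd2
          have h5 := OmegaAux.chebB_pos hm3 hd1 hd2
          rwa [← hsB] at h5
        have hB3 : ∀ i k : ℕ, i+k+2 ≤ orderOf (r₁*r₂) →
            0 < OmegaAux.cheb s (i+1) * OmegaAux.cheb s (k+1)
              - OmegaAux.cheb s i * OmegaAux.cheb s k := by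
          intro i k h
          have h5 := OmegaAux.chebB3 hm3 i k h
          rwa [← hsB] at h5
        have hB4 : ∀ i k : ℕ, i < orderOf (r₁*r₂) → k < orderOf (r₁*r₂) →
            orderOf (r₁*r₂) ≤ i + k →
            0 < OmegaAux.cheb s i * OmegaAux.cheb s k
              - OmegaAux.cheb s (i+1) * OmegaAux.cheb s (k+1) := by
          intro i k h1 h2 h3
          have h5 := OmegaAux.chebB4 hm3 i k h1 h2 h3
          rwa [← hsB] at h5
        rcases X with i | k <;> rcases Y with j | k'
        · obtain ⟨hij, hj⟩ := hB
          have hjm : j < orderOf (r₁*r₂) := by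
            rcases hj with h | h
            · omega
            · exact h
          refine ⟨OmegaAux.candP x s i, OmegaAux.candQ y s i, OmegaAux.candP x s j,
            OmegaAux.candQ y s j, ?_, ?_, ?_⟩
          · simpa only [dihedralRefl] using hco1 i (Or.inr (by omega))
          · simpa only [dihedralRefl] using hco1 j (Or.inr hjm)
          · obtain ⟨c, hc, hc1, hc2⟩ := OmegaAux.scale_same x y s hx hy hs hs2 i j
            have e : OmegaAux.candP x s i * OmegaAux.candQ y s j
                - OmegaAux.candQ y s i * OmegaAux.candP x s j
                = c * (OmegaAux.cheb s (i+1) * OmegaAux.cheb s j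
                  - OmegaAux.cheb s i * OmegaAux.cheb s (j+1)) := by
              simp only [OmegaAux.candP, OmegaAux.candQ]
              linear_combination (OmegaAux.cheb s (i+1) * OmegaAux.cheb s j) * hc1
                - (OmegaAux.cheb s i * OmegaAux.cheb s (j+1)) * hc2
            rw [e]
            obtain ⟨d, hd, hd0⟩ : ∃ d, j = i + d ∧ 0 < d := ⟨j - i, by omega, by omega⟩
            have e2 : OmegaAux.cheb s (i+1) * OmegaAux.cheb s j
                - OmegaAux.cheb s i * OmegaAux.cheb s (j+1) = OmegaAux.cheb s d := by
              rw [hd]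
              linear_combination OmegaAux.cheb_det s d i
            rw [e2]
            exact mul_pos hc (hposd d hd0 (by omega))
        · rcases hB with h | ⟨hk', hik⟩
          · exact absurd h hm0'
          refine ⟨OmegaAux.candP x s i, OmegaAux.candQ y s i, OmegaAux.candQ x s k',
            OmegaAux.candP y s k', ?_, ?_, ?_⟩
          · simpa only [dihedralRefl] using hco1 i (Or.inr (by omega))
          · simpa only [dihedralRefl] using hco2 k' (Or.inr hk')
          · obtain ⟨c, hc, hc1, hc2⟩ := OmegaAux.scale_cross x y s hx hy hs hs2 i k'
            have e : OmegaAux.candP x s i * OmegaAux.candP y s k'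
                - OmegaAux.candQ y s i * OmegaAux.candQ x s k'
                = c * (OmegaAux.cheb s (i+1) * OmegaAux.cheb s (k'+1)
                  - OmegaAux.cheb s i * OmegaAux.cheb s k') := by
              simp only [OmegaAux.candP, OmegaAux.candQ]
              linear_combination (OmegaAux.cheb s (i+1) * OmegaAux.cheb s (k'+1)) * hc1
                - (OmegaAux.cheb s i * OmegaAux.cheb s k') * hc2
            rw [e]
            exact mul_pos hc (hB3 i k' (by omega))
        · obtain ⟨hne, hk, hj, hmk⟩ := hB
          refine ⟨OmegaAux.candQ x s k, OmegaAux.candP y s k, OmegaAux.candP x s j,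
            OmegaAux.candQ y s j, ?_, ?_, ?_⟩
          · simpa only [dihedralRefl] using hco2 k (Or.inr hk)
          · simpa only [dihedralRefl] using hco1 j (Or.inr hj)
          · obtain ⟨c, hc, hc1, hc2⟩ := OmegaAux.scale_cross x y s hx hy hs hs2 j k
            have e : OmegaAux.candQ x s k * OmegaAux.candQ y s j
                - OmegaAux.candP y s k * OmegaAux.candP x s j
                = c * (OmegaAux.cheb s j * OmegaAux.cheb s k
                  - OmegaAux.cheb s (j+1) * OmegaAux.cheb s (k+1)) := by
              simp only [OmegaAux.candP, OmegaAux.candQ]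
              linear_combination (OmegaAux.cheb s j * OmegaAux.cheb s k) * hc2
                - (OmegaAux.cheb s (j+1) * OmegaAux.cheb s (k+1)) * hc1
            rw [e]
            exact mul_pos hc (hB4 j k hj hk (by omega))
        · obtain ⟨hkk, hkm⟩ := hB
          have hkm' : k < orderOf (r₁*r₂) := by
            rcases hkm with h | h
            · omega
            · exact h
          refine ⟨OmegaAux.candQ x s k, OmegaAux.candP y s k, OmegaAux.candQ x s k',
            OmegaAux.candP y s k', ?_, ?_, ?_⟩
          · simpa only [dihedralRefl] using hco2 k (Or.inr hkm')
          · simpa only [dihedralRefl] using hco2 k' (Or.inr (by omega))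
          · obtain ⟨c, hc, hc1, hc2⟩ :=
              OmegaAux.scale_same y x s hy hx hs (by rw [hs2]; ring) k k'
            have e : OmegaAux.candQ x s k * OmegaAux.candP y s k'
                - OmegaAux.candP y s k * OmegaAux.candQ x s k'
                = c * (OmegaAux.cheb s k * OmegaAux.cheb s (k'+1)
                  - OmegaAux.cheb s (k+1) * OmegaAux.cheb s k') := by
              simp only [OmegaAux.candP, OmegaAux.candQ]
              linear_combination (OmegaAux.cheb s k * OmegaAux.cheb s (k'+1)) * hc2
                - (OmegaAux.cheb s (k+1) * OmegaAux.cheb s k') * hc1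
            rw [e]
            obtain ⟨d, hd, hd0⟩ : ∃ d, k = k' + d ∧ 0 < d := ⟨k - k', by omega, by omega⟩
            have e2 : OmegaAux.cheb s k * OmegaAux.cheb s (k'+1)
                - OmegaAux.cheb s (k+1) * OmegaAux.cheb s k' = OmegaAux.cheb s d := by
              rw [hd]
              linear_combination OmegaAux.cheb_det s d k'
            rw [e2]
            exact mul_pos hc (hposd d hd0 (by omega))
  refine ⟨?_, ?_, ?_⟩
  · intro hc X Y _ _
    obtain ⟨p, q, hu⟩ := hcone X
    obtain ⟨p', q', hv⟩ := hcone Y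
    rw [hω p q p' q' _ _ hu hv, hc, mul_zero]
  · intro hc X Y hB
    obtain ⟨p, q, p', q', hu, hv, hdet⟩ := key X Y hB
    rw [hω p q p' q' _ _ hu hv]
    exact mul_neg_of_pos_of_neg hdet hc
  · intro hc X Y hB
    obtain ⟨p, q, p', q', hu, hv, hdet⟩ := key X Y hB
    rw [hω p q p' q' _ _ hu hv]
    exact mul_pos hdet hc
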